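/- arXiv:2102.09942 — 3 statements merged into one kernel-verified Lean document; each statement's English description precedes it below -/
import Mathlib

section
/- Suppose X, Y are complex numbers with Z := max(|X|, |Y|) > 0, that the product ∏_{j=1}^n |β_j| ≤ c_0 · Z^k, that i is an index (1 ≤ i ≤ n) with |β_i| = min_{1≤j≤n} |β_j|, and that Z ≥ c_{4i}. Then |β_i| ≤ c_{5i} · Z^{k−n+1}. (This is Lemma 1 of the paper; the exponent k−n+1 is the one the proof yields.) -/
open Finset

/-- Lemma 1 of the paper: if `Z ≥ c₄ᵢ` then `|βᵢ| ≤ c₅ᵢ · Z^(k-n+1)`. -/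
theorem stmt0 (n k : ℕ) (hn : 2 ≤ n) (hk : k < n)
    (α lam : Fin n → ℂ) (hα0 : ∀ j, α j ≠ 0) (hαinj : Function.Injective α)
    (c0 : ℝ) (hc0 : 0 < c0)
    (X Y : ℂ) (Z : ℝ) (hZ : Z = max (‖X‖) (‖Y‖)) (hZpos : 0 < Z)
    (β : Fin n → ℂ) (hβ : ∀ j, β j = X - α j * Y + lam j)
    (hprod : ∏ j, ‖β j‖ ≤ c0 * Z ^ k)
    (i : Fin n)
    (hmin : ‖β i‖
      = (univ : Finset (Fin n)).inf' ⟨i, mem_univ i⟩ (fun j => ‖β j‖))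
    (ε : ℝ) (hε0 : 0 < ε) (hε1 : ε < 1)
    (c1 c2 c3 : Fin n → ℝ)
    (hc1 : ∀ j, c1 j = ‖α j - α i‖ * min 1 (1 / ‖α i‖))
    (hc2 : ∀ j, c2 j = c0 ^ ((1 : ℝ) / n) * max 1 (‖α j‖ / ‖α i‖))
    (hc3 : ∀ j, c3 j = max (‖lam j - lam i‖)
      (‖α i * lam j - α j * lam i‖ / ‖α i‖))
    (hZ4 : (univ.erase i).sup'
        (by
          refine Finset.card_pos.mp ?_
          rw [Finset.card_erase_of_mem (Finset.mem_univ i), Finset.card_univ, Fintype.card_fin]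
          omega)
        (fun j => max ((2 * c2 j / (ε * c1 j)) ^ ((n : ℝ) / ((n : ℝ) - (k : ℝ))))
          (2 * c3 j / ((1 - ε) * c1 j))) ≤ Z) :
    ‖β i‖
      ≤ (2 ^ (n - 1) * c0 / ∏ j ∈ univ.erase i, c1 j) * Z ^ ((k : ℝ) - (n : ℝ) + 1) := by
  have tri : ∀ a b c : ℂ, ‖a - b - c‖
      ≤ ‖a‖ + ‖b‖ + ‖c‖ := by
    intro a b c
    calc ‖a - b - c‖ ≤ ‖a - b‖ + ‖c‖ := norm_sub_le _ _
      _ ≤ ‖a‖ + ‖b‖ + ‖c‖ := by linarith [norm_sub_le a b]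
  have hαipos : 0 < ‖α i‖ := norm_pos_iff.mpr (hα0 i)
  have hnR : (0:ℝ) < n := by positivity
  have hnkR : (0:ℝ) < (n:ℝ) - k := by
    have : (k:ℝ) < n := by exact_mod_cast hk
    linarith
  have hi : ∀ j, ‖β i‖ ≤ ‖β j‖ := by
    intro j
    rw [hmin]
    exact Finset.inf'_le _ (mem_univ j)
  have hc1pos : ∀ j ∈ univ.erase i, 0 < c1 j := by
    intro j hj
    rw [hc1]
    apply mul_pos
    · rw [norm_pos_iff, sub_ne_zero]
      exact fun h => (Finset.mem_erase.mp hj).1 (hαinj h)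
    · exact lt_min one_pos (by positivity)
  -- bound |β i| ≤ c0^(1/n) Z^(k/n)
  have hβi_pow : ‖β i‖ ^ n ≤ c0 * Z ^ k := by
    calc ‖β i‖ ^ n = ∏ _j : Fin n, ‖β i‖ := by
          simp [Finset.prod_const, Finset.card_univ]
      _ ≤ ∏ j, ‖β j‖ :=
          Finset.prod_le_prod (fun _ _ => norm_nonneg _) (fun j _ => hi j)
      _ ≤ c0 * Z ^ k := hprod
  have hβi_bound : ‖β i‖ ≤ c0 ^ ((1:ℝ)/n) * Z ^ ((k:ℝ)/n) := by
    have h1 : ‖β i‖ = (‖β i‖ ^ (n:ℝ)) ^ ((1:ℝ)/n) := by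
      rw [← Real.rpow_mul (norm_nonneg _), mul_one_div, div_self (ne_of_gt hnR),
        Real.rpow_one]
    rw [h1]
    have h2 : (‖β i‖ ^ (n:ℝ)) ^ ((1:ℝ)/n) ≤ (c0 * Z ^ k) ^ ((1:ℝ)/n) := by
      apply Real.rpow_le_rpow (by positivity) _ (by positivity)
      rw [Real.rpow_natCast]
      exact hβi_pow
    refine h2.trans_eq ?_
    rw [Real.mul_rpow hc0.le (by positivity), ← Real.rpow_natCast Z k,
        ← Real.rpow_mul hZpos.le, mul_one_div]
  -- key lower bound on |β j| for j ≠ i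
  have key : ∀ j ∈ univ.erase i, c1 j * Z / 2 ≤ ‖β j‖ := by
    intro j hj
    have hc1p := hc1pos j hj
    have hc2p : 0 < c2 j := by
      rw [hc2]
      exact mul_pos (Real.rpow_pos_of_pos hc0 _)
        (lt_of_lt_of_le one_pos (le_max_left _ _))
    have hc3nn : 0 ≤ c3 j := by
      rw [hc3]
      exact le_trans (norm_nonneg _) (le_max_left _ _)
    have hsup := Finset.le_sup' (f := fun j => max
        ((2 * c2 j / (ε * c1 j)) ^ ((n : ℝ) / ((n : ℝ) - (k : ℝ))))
        (2 * c3 j / ((1 - ε) * c1 j))) hj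
    have hZA : (2 * c2 j / (ε * c1 j)) ^ ((n : ℝ) / ((n : ℝ) - (k : ℝ))) ≤ Z :=
      le_trans (le_trans (le_max_left _ _) hsup) hZ4
    have hZB : 2 * c3 j / ((1 - ε) * c1 j) ≤ Z :=
      le_trans (le_trans (le_max_right _ _) hsup) hZ4
    have hεc1 : 0 < ε * c1 j := mul_pos hε0 hc1p
    have hApos : 0 < 2 * c2 j / (ε * c1 j) := by positivity
    -- from hZA : 2 c2 Z^{k/n} ≤ ε c1 Z
    have hA_le : 2 * c2 j / (ε * c1 j) ≤ Z ^ (((n:ℝ) - k)/n) := by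
      have h := Real.rpow_le_rpow (Real.rpow_nonneg hApos.le _) hZA
        (by positivity : (0:ℝ) ≤ ((n:ℝ) - k)/n)
      have hexp : (n:ℝ)/((n:ℝ) - (k:ℝ)) * (((n:ℝ) - k)/n) = 1 := by
        field_simp
      rwa [← Real.rpow_mul hApos.le, hexp, Real.rpow_one] at h
    have h2 : 2 * c2 j ≤ ε * c1 j * Z ^ (((n:ℝ) - k)/n) := by
      rw [div_le_iff₀ hεc1] at hA_le
      linarith
    have hZkn : 0 < Z ^ ((k:ℝ)/n) := Real.rpow_pos_of_pos hZpos _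
    have hexp2 : ((n:ℝ) - k)/n + (k:ℝ)/n = 1 := by field_simp; ring
    have hZsum : Z ^ (((n:ℝ) - k)/n) * Z ^ ((k:ℝ)/n) = Z := by
      rw [← Real.rpow_add hZpos, hexp2, Real.rpow_one]
    have h3 : 2 * c2 j * Z ^ ((k:ℝ)/n) ≤ ε * c1 j * Z := by
      calc 2 * c2 j * Z ^ ((k:ℝ)/n)
          ≤ ε * c1 j * Z ^ (((n:ℝ) - k)/n) * Z ^ ((k:ℝ)/n) :=
            mul_le_mul_of_nonneg_right h2 hZkn.le
        _ = ε * c1 j * (Z ^ (((n:ℝ) - k)/n) * Z ^ ((k:ℝ)/n)) := by ring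
        _ = ε * c1 j * Z := by rw [hZsum]
    have h4 : 2 * c3 j ≤ (1 - ε) * c1 j * Z := by
      have h1ε : 0 < (1 - ε) * c1 j := mul_pos (by linarith) hc1p
      rw [div_le_iff₀ h1ε] at hZB
      linarith
    -- main geometric inequality
    set M := max 1 (‖α j‖ / ‖α i‖) with hM
    have hM1 : 1 ≤ M := le_max_left _ _
    have main : c1 j * Z ≤ ‖β j‖ + M * ‖β i‖ + c3 j := by
      rcases le_total (‖X‖) (‖Y‖) with hxy | hxy
      · -- Z = |Y|
        have hZY : Z = ‖Y‖ := by rw [hZ, max_eq_right hxy]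
        have hid : (α i - α j) * Y = (β j - β i) - (lam j - lam i) := by
          rw [hβ j, hβ i]; ring
        have h1 : ‖α j - α i‖ * ‖Y‖
            ≤ ‖β j‖ + ‖β i‖ + ‖lam j - lam i‖ := by
          have h := tri (β j) (β i) (lam j - lam i)
          rw [← hid, norm_mul] at h
          rwa [norm_sub_rev]
        have h2 : c1 j * Z ≤ ‖α j - α i‖ * ‖Y‖ := by
          rw [hc1, hZY]
          calc ‖α j - α i‖ * min 1 (1 / ‖α i‖) * ‖Y‖
              ≤ ‖α j - α i‖ * 1 * ‖Y‖ := by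
                gcongr
                exact min_le_left _ _
            _ = ‖α j - α i‖ * ‖Y‖ := by ring
        have h5 : ‖β i‖ ≤ M * ‖β i‖ :=
          le_mul_of_one_le_left (norm_nonneg _) hM1
        have h6 : ‖lam j - lam i‖ ≤ c3 j := by
          rw [hc3]; exact le_max_left _ _
        linarith
      · -- Z = |X|
        have hZX : Z = ‖X‖ := by rw [hZ, max_eq_left hxy]
        have hid : (α i - α j) * X
            = (α i * β j - α j * β i) - (α i * lam j - α j * lam i) := by
          rw [hβ j, hβ i]; ring
        have h1 : ‖α j - α i‖ * ‖X‖
            ≤ ‖α i‖ * ‖β j‖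
              + ‖α j‖ * ‖β i‖
              + ‖α i * lam j - α j * lam i‖ := by
          have h := tri (α i * β j) (α j * β i) (α i * lam j - α j * lam i)
          rw [← hid, norm_mul, norm_mul, norm_mul] at h
          rwa [norm_sub_rev]
        have h2 : c1 j * Z ≤ ‖α j - α i‖ * ‖X‖ / ‖α i‖ := by
          rw [hc1, hZX]
          have hm : min 1 (1 / ‖α i‖) ≤ 1 / ‖α i‖ := min_le_right _ _
          calc ‖α j - α i‖ * min 1 (1 / ‖α i‖) * ‖X‖
              ≤ ‖α j - α i‖ * (1 / ‖α i‖) * ‖X‖ := by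
                gcongr
            _ = ‖α j - α i‖ * ‖X‖ / ‖α i‖ := by ring
        have h3' : ‖α j - α i‖ * ‖X‖ / ‖α i‖
            ≤ ‖β j‖ + (‖α j‖ / ‖α i‖) * ‖β i‖
              + ‖α i * lam j - α j * lam i‖ / ‖α i‖ := by
          rw [div_le_iff₀ hαipos]
          have hrw : (‖β j‖
              + (‖α j‖ / ‖α i‖) * ‖β i‖
              + ‖α i * lam j - α j * lam i‖ / ‖α i‖)
                * ‖α i‖
              = ‖α i‖ * ‖β j‖
                + ‖α j‖ * ‖β i‖
                + ‖α i * lam j - α j * lam i‖ := by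
            field_simp
          rw [hrw]
          exact h1
        have h5 : (‖α j‖ / ‖α i‖) * ‖β i‖
            ≤ M * ‖β i‖ :=
          mul_le_mul_of_nonneg_right (le_max_right _ _) (norm_nonneg _)
        have h6 : ‖α i * lam j - α j * lam i‖ / ‖α i‖ ≤ c3 j := by
          rw [hc3]; exact le_max_right _ _
        linarith
    -- combine
    have hMβ : M * ‖β i‖ ≤ c2 j * Z ^ ((k:ℝ)/n) := by
      have := mul_le_mul_of_nonneg_left hβi_bound (le_trans zero_le_one hM1)
      calc M * ‖β i‖ ≤ M * (c0 ^ ((1:ℝ)/n) * Z ^ ((k:ℝ)/n)) := this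
        _ = c2 j * Z ^ ((k:ℝ)/n) := by rw [hc2]; ring
    linarith [main, hMβ, h3, h4]
  -- assemble the product bound
  have hprodsplit : ∏ j, ‖β j‖
      = ‖β i‖ * ∏ j ∈ univ.erase i, ‖β j‖ :=
    (Finset.mul_prod_erase univ _ (mem_univ i)).symm
  have hcard : (univ.erase i).card = n - 1 := by
    rw [Finset.card_erase_of_mem (mem_univ i), Finset.card_univ, Fintype.card_fin]
  have hprodlow : (∏ j ∈ univ.erase i, c1 j) * (Z/2) ^ (n-1)
      ≤ ∏ j ∈ univ.erase i, ‖β j‖ := by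
    have h := Finset.prod_le_prod (s := univ.erase i) (f := fun j => c1 j * (Z/2))
      (g := fun j => ‖β j‖)
      (fun j hj => mul_nonneg (hc1pos j hj).le (by positivity))
      (fun j hj => by
        have := key j hj
        calc c1 j * (Z/2) = c1 j * Z / 2 := by ring
          _ ≤ ‖β j‖ := key j hj)
    rwa [Finset.prod_mul_distrib, Finset.prod_const, hcard] at h
  set P := ∏ j ∈ univ.erase i, c1 j with hP
  have hPpos : 0 < P := Finset.prod_pos hc1pos
  have hZn1 : (0:ℝ) < (Z/2) ^ (n-1) := by positivity
  have hmain : ‖β i‖ * (P * (Z/2) ^ (n-1)) ≤ c0 * Z ^ k := by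
    calc ‖β i‖ * (P * (Z/2) ^ (n-1))
        ≤ ‖β i‖ * ∏ j ∈ univ.erase i, ‖β j‖ :=
          mul_le_mul_of_nonneg_left hprodlow (norm_nonneg _)
      _ = ∏ j, ‖β j‖ := hprodsplit.symm
      _ ≤ c0 * Z ^ k := hprod
  have hZrw : Z ^ ((k:ℝ) - (n:ℝ) + 1) = Z ^ k / Z ^ (n-1) := by
    have hcast : ((n-1:ℕ):ℝ) = (n:ℝ) - 1 := by
      rw [Nat.cast_sub (by omega)]; norm_num
    rw [show (k:ℝ) - (n:ℝ) + 1 = (k:ℝ) - ((n-1:ℕ):ℝ) by rw [hcast]; ring,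
      Real.rpow_sub hZpos, Real.rpow_natCast, Real.rpow_natCast]
  rw [hZrw]
  rw [div_pow] at hmain
  have h2n : (0:ℝ) < 2 ^ (n-1) := by positivity
  have hZpn : (0:ℝ) < Z ^ (n-1) := by positivity
  have hfin : ‖β i‖ ≤ c0 * Z ^ k / (P * (Z ^ (n-1) / 2 ^ (n-1))) := by
    rw [le_div_iff₀ (by positivity)]
    exact hmain
  refine hfin.trans_eq ?_
  field_simp
end

section
/- Suppose X, Y are complex numbers with Z := max(|X|, |Y|) > 0, that ∏_{j=1}^n |β_j| ≤ c_0 · Z^k, and that i is an index (1 ≤ i ≤ n) with |β_i| = min_{1≤j≤n} |β_j|. Then for every j ≠ i (1 ≤ j ≤ n) one has |β_j| ≥ c_{1ij} Z − c_{2ij} Z^{k/n} − c_{3ij}. -/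
open Finset

/-- Estimate (14) of the paper: `|βⱼ| ≥ c₁ᵢⱼ Z − c₂ᵢⱼ Z^(k/n) − c₃ᵢⱼ` for all `j ≠ i`. -/
theorem stmt1 (n k : ℕ) (hn : 2 ≤ n) (hk : k < n)
    (α lam : Fin n → ℂ) (hα0 : ∀ j, α j ≠ 0) (hαinj : Function.Injective α)
    (c0 : ℝ) (hc0 : 0 < c0)
    (X Y : ℂ) (Z : ℝ) (hZ : Z = max (‖X‖) (‖Y‖)) (hZpos : 0 < Z)
    (β : Fin n → ℂ) (hβ : ∀ j, β j = X - α j * Y + lam j)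
    (hprod : ∏ j, ‖β j‖ ≤ c0 * Z ^ k)
    (i : Fin n)
    (hmin : ‖β i‖
      = (univ : Finset (Fin n)).inf' ⟨i, mem_univ i⟩ (fun j => ‖β j‖))
    (c1 c2 c3 : Fin n → ℝ)
    (hc1 : ∀ j, c1 j = ‖α j - α i‖ * min 1 (1 / ‖α i‖))
    (hc2 : ∀ j, c2 j = c0 ^ ((1 : ℝ) / n) * max 1 (‖α j‖ / ‖α i‖))
    (hc3 : ∀ j, c3 j = max (‖lam j - lam i‖)
      (‖α i * lam j - α j * lam i‖ / ‖α i‖)) :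
    ∀ j, j ≠ i →
      ‖β j‖ ≥ c1 j * Z - c2 j * Z ^ ((k : ℝ) / (n : ℝ)) - c3 j := by
  intro j hj
  have tri : ∀ x y : ℂ, ‖x - y‖ ≤ ‖x‖ + ‖y‖ := fun x y => by
    simpa [sub_eq_add_neg] using norm_add_le x (-y)
  have habsi : (0:ℝ) < ‖α i‖ := norm_pos_iff.mpr (hα0 i)
  have hβnonneg : ∀ t, 0 ≤ ‖β t‖ := fun t => norm_nonneg _
  have hβi_le : ∀ t, ‖β i‖ ≤ ‖β t‖ := by
    intro t
    rw [hmin]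
    exact Finset.inf'_le _ (mem_univ t)
  have hnpos : (0:ℝ) < (n:ℝ) := by
    have : 0 < n := by omega
    exact_mod_cast this
  have hpow : ‖β i‖ ^ n ≤ c0 * Z ^ k := by
    calc ‖β i‖ ^ n = ∏ _t : Fin n, ‖β i‖ := by
          simp [Finset.prod_const, Finset.card_univ]
      _ ≤ ∏ t, ‖β t‖ :=
          Finset.prod_le_prod (fun t _ => hβnonneg i) (fun t _ => hβi_le t)
      _ ≤ c0 * Z ^ k := hprod
  have hβi_bound : ‖β i‖ ≤ c0 ^ ((1:ℝ)/n) * Z ^ ((k:ℝ)/n) := by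
    have h1 : ‖β i‖ = (‖β i‖ ^ n) ^ ((1:ℝ)/n) := by
      rw [← Real.rpow_natCast (‖β i‖) n, ← Real.rpow_mul (hβnonneg i),
        mul_one_div, div_self (ne_of_gt hnpos), Real.rpow_one]
    rw [h1]
    have h2 : (‖β i‖ ^ n) ^ ((1:ℝ)/n) ≤ (c0 * Z ^ k) ^ ((1:ℝ)/n) :=
      Real.rpow_le_rpow (by positivity) hpow (by positivity)
    refine h2.trans_eq ?_
    rw [Real.mul_rpow hc0.le (by positivity), ← Real.rpow_natCast Z k,
        ← Real.rpow_mul hZpos.le, mul_one_div]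
  set a := ‖α i‖ with ha
  set m := max 1 (‖α j‖ / a) with hmdef
  have hm1 : (1:ℝ) ≤ m := le_max_left _ _
  have hm0 : (0:ℝ) ≤ m := le_trans zero_le_one hm1
  have hkey : c1 j * Z ≤ ‖β j‖ + m * ‖β i‖ + c3 j := by
    rw [hc1 j]
    rcases max_choice (‖X‖) (‖Y‖) with h | h
    · -- Z = |X|
      have hZX : Z = ‖X‖ := by rw [hZ, h]
      have key : (α i - α j) * X = α i * β j - α j * β i - (α i * lam j - α j * lam i) := by
        rw [hβ i, hβ j]; ring
      have h2 : ‖α j - α i‖ * ‖X‖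
          ≤ a * ‖β j‖ + ‖α j‖ * ‖β i‖
            + ‖α i * lam j - α j * lam i‖ := by
        calc ‖α j - α i‖ * ‖X‖
            = ‖(α i - α j) * X‖ := by
              rw [norm_mul, norm_sub_rev]
          _ = ‖α i * β j - α j * β i - (α i * lam j - α j * lam i)‖ := by rw [key]
          _ ≤ ‖α i * β j - α j * β i‖
              + ‖α i * lam j - α j * lam i‖ := tri _ _
          _ ≤ ‖α i * β j‖ + ‖α j * β i‖
              + ‖α i * lam j - α j * lam i‖ := by
              have := tri (α i * β j) (α j * β i); linarith
          _ = a * ‖β j‖ + ‖α j‖ * ‖β i‖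
              + ‖α i * lam j - α j * lam i‖ := by rw [norm_mul, norm_mul]
      calc ‖α j - α i‖ * min 1 (1/a) * Z
          = ‖α j - α i‖ * ‖X‖ * min 1 (1/a) := by rw [hZX]; ring
        _ ≤ ‖α j - α i‖ * ‖X‖ * (1/a) :=
            mul_le_mul_of_nonneg_left (min_le_right _ _) (by positivity)
        _ = (‖α j - α i‖ * ‖X‖) / a := by ring
        _ ≤ (a * ‖β j‖ + ‖α j‖ * ‖β i‖
              + ‖α i * lam j - α j * lam i‖) / a := by
            exact div_le_div_of_nonneg_right h2 habsi.le |>.trans_eq rfl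
        _ = ‖β j‖ + (‖α j‖ / a) * ‖β i‖
              + ‖α i * lam j - α j * lam i‖ / a := by
            field_simp
        _ ≤ ‖β j‖ + m * ‖β i‖ + c3 j := by
            have h3 : (‖α j‖ / a) * ‖β i‖ ≤ m * ‖β i‖ :=
              mul_le_mul_of_nonneg_right (le_max_right _ _) (hβnonneg i)
            have h4 : ‖α i * lam j - α j * lam i‖ / a ≤ c3 j := by
              rw [hc3 j]; exact le_max_right _ _
            linarith
    · -- Z = |Y|
      have hZY : Z = ‖Y‖ := by rw [hZ, h]
      have key : (α i - α j) * Y = β j - β i - (lam j - lam i) := by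
        rw [hβ i, hβ j]; ring
      calc ‖α j - α i‖ * min 1 (1/a) * Z
          ≤ ‖α j - α i‖ * 1 * Z := by
            apply mul_le_mul_of_nonneg_right _ hZpos.le
            exact mul_le_mul_of_nonneg_left (min_le_left _ _) (by positivity)
        _ = ‖(α i - α j) * Y‖ := by
            rw [norm_mul, norm_sub_rev, hZY]; ring
        _ = ‖β j - β i - (lam j - lam i)‖ := by rw [key]
        _ ≤ ‖β j‖ + ‖β i‖ + ‖lam j - lam i‖ := by
            have t1 := tri (β j - β i) (lam j - lam i)
            have t2 := tri (β j) (β i)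
            linarith
        _ ≤ ‖β j‖ + m * ‖β i‖ + c3 j := by
            have h3 : ‖β i‖ ≤ m * ‖β i‖ :=
              le_mul_of_one_le_left (hβnonneg i) hm1
            have h4 : ‖lam j - lam i‖ ≤ c3 j := by
              rw [hc3 j]; exact le_max_left _ _
            linarith
  have h5 : m * ‖β i‖ ≤ c2 j * Z ^ ((k:ℝ)/(n:ℝ)) := by
    have := mul_le_mul_of_nonneg_left hβi_bound hm0
    have heq : c2 j * Z ^ ((k:ℝ)/(n:ℝ)) = m * (c0 ^ ((1:ℝ)/n) * Z ^ ((k:ℝ)/n)) := by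
      rw [hc2 j]; ring
    linarith [heq ▸ this]
  linarith
end

section
/- Suppose b_1 is a nonzero vector of L satisfying ‖b_1‖² ≤ 2^{2m} ‖v‖² for every nonzero v ∈ L (the property of the first vector of an LLL-reduced basis of L) and ‖b_1‖ ≥ √((2m+1) · 2^{2m}) · A_0. Let x_1, …, x_m, y_1, …, y_m ∈ ℤ, set A = max(max_j |x_j|, max_j |y_j|), and suppose 2c_λ ≤ A ≤ A_0 and that β := ∑_{k=1}^m x_k ω_k − α ∑_{k=1}^m y_k ω_k + λ satisfies |β| ≤ c_9 · A^{k+1−n}. Then A ≤ (2 c_9 H / (√3 · A_0))^{1/(n−k−1)}. (This is Theorem 1 of the paper, with the cited LLL inequality taken as a hypothesis on b_1.) -/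
set_option maxHeartbeats 1000000


open Finset

/-- The lattice vector with coefficient vector `(x₁,…,x_m,y₁,…,y_m,t)` of the lattice
used in the reduction step: the first `2m` coordinates are `x₁,…,x_m,y₁,…,y_m`, the
`(2m+1)`-st coordinate is `t`, and the last two coordinates are `H·Re(β)` and `H·Im(β)`
where `β = ∑ₖ xₖ ωₖ − α ∑ₖ yₖ ωₖ + t·λ`. -/
noncomputable def latVec (m : ℕ) (ω : Fin m → ℂ) (α lam : ℂ) (H : ℝ)
    (x y : Fin m → ℤ) (t : ℤ) : EuclideanSpace ℝ (Fin (2 * m + 3)) :=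
  WithLp.toLp 2 fun j =>
    if hj : (j : ℕ) < m then (x ⟨j, hj⟩ : ℝ)
    else if hj2 : (j : ℕ) < 2 * m then (y ⟨(j : ℕ) - m, by omega⟩ : ℝ)
    else if (j : ℕ) = 2 * m then (t : ℝ)
    else if (j : ℕ) = 2 * m + 1 then
      H * (∑ k, (x k : ℝ) * (ω k).re - ∑ k, (y k : ℝ) * (α * ω k).re + (t : ℝ) * lam.re)
    else
      H * (∑ k, (x k : ℝ) * (ω k).im - ∑ k, (y k : ℝ) * (α * ω k).im + (t : ℝ) * lam.im)

/-- Theorem 1 of the paper (the LLL reduction step), with the cited LLL inequality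
`‖b₁‖² ≤ 2^(2m) ‖v‖²` for all nonzero lattice vectors `v` taken as a hypothesis. -/
theorem stmt7 (m n k : ℕ) (hm : 1 ≤ m) (hn : 2 ≤ n) (hk : k + 2 ≤ n)
    (ω : Fin m → ℂ) (hω1 : ω ⟨0, by omega⟩ = 1) (α lam : ℂ)
    (H A0 c9 clam : ℝ) (hH : 0 < H) (hA0 : 0 < A0) (hc9 : 0 < c9) (hclam : 1 ≤ clam)
    (hlam : ‖lam‖ ≤ clam)
    (L : Set (EuclideanSpace ℝ (Fin (2 * m + 3))))
    (hL : L = {v | ∃ x y : Fin m → ℤ, ∃ t : ℤ, v = latVec m ω α lam H x y t})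
    (b1 : EuclideanSpace ℝ (Fin (2 * m + 3))) (hb1L : b1 ∈ L) (hb1ne : b1 ≠ 0)
    (hLLL : ∀ v ∈ L, v ≠ 0 → ‖b1‖ ^ 2 ≤ 2 ^ (2 * m) * ‖v‖ ^ 2)
    (hb1 : ‖b1‖ ≥ Real.sqrt ((2 * m + 1) * 2 ^ (2 * m)) * A0)
    (x y : Fin m → ℤ) (A : ℝ)
    (hA : A = max
      (Finset.univ.sup' ⟨⟨0, by omega⟩, mem_univ _⟩ (fun j => (|x j| : ℝ)))
      (Finset.univ.sup' ⟨⟨0, by omega⟩, mem_univ _⟩ (fun j => (|y j| : ℝ))))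
    (hAlow : 2 * clam ≤ A) (hAup : A ≤ A0)
    (β : ℂ) (hβ : β = ∑ k, (x k : ℂ) * ω k - α * ∑ k, (y k : ℂ) * ω k + lam)
    (hβsmall : ‖β‖ ≤ c9 * A ^ ((k : ℝ) + 1 - (n : ℝ))) :
    A ≤ (2 * c9 * H / (Real.sqrt 3 * A0)) ^ ((1 : ℝ) / ((n : ℝ) - (k : ℝ) - 1)) := by
  have hA2 : (2:ℝ) ≤ A := le_trans (by linarith) hAlow
  have hApos : (0:ℝ) < A := by linarith
  have hxA : ∀ i, |(x i : ℝ)| ≤ A := by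
    intro i
    rw [hA]
    exact le_max_of_le_left (Finset.le_sup' (fun j => |((x j : ℤ) : ℝ)|) (mem_univ i))
  have hyA : ∀ i, |(y i : ℝ)| ≤ A := by
    intro i
    rw [hA]
    exact le_max_of_le_right (Finset.le_sup' (fun j => |((y j : ℤ) : ℝ)|) (mem_univ i))
  set v : EuclideanSpace ℝ (Fin (2 * m + 3)) := latVec m ω α lam H x y 1 with hv
  have hvL : v ∈ L := by rw [hL]; exact ⟨x, y, 1, rfl⟩
  have hval2m : ∀ i : Fin (2 * m + 3), (i : ℕ) = 2 * m → v i = 1 := by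
    intro i hi
    rw [hv]
    simp only [latVec, WithLp.ofLp_toLp]
    split_ifs <;> first | (exfalso; omega) | norm_num
  have hvne : v ≠ 0 := by
    intro h
    have h1 := congrFun (congrArg WithLp.ofLp h) ⟨2 * m, by omega⟩
    rw [hval2m ⟨2 * m, by omega⟩ rfl] at h1
    norm_num [PiLp.zero_apply] at h1
  -- real and imaginary parts of β
  have hβre : β.re = ∑ k, (x k : ℝ) * (ω k).re - ∑ k, (y k : ℝ) * (α * ω k).re + lam.re := by
    have h1 : (∑ k, (x k : ℂ) * ω k).re = ∑ k, (x k : ℝ) * (ω k).re := by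
      rw [Complex.re_sum]
      exact Finset.sum_congr rfl fun i _ => by simp [Complex.mul_re]
    have h2 : (α * ∑ k, (y k : ℂ) * ω k).re = ∑ k, (y k : ℝ) * (α * ω k).re := by
      rw [Finset.mul_sum, Complex.re_sum]
      refine Finset.sum_congr rfl fun i _ => ?_
      rw [mul_left_comm]
      simp [Complex.mul_re]
    rw [hβ, Complex.add_re, Complex.sub_re, h1, h2]
  have hβim : β.im = ∑ k, (x k : ℝ) * (ω k).im - ∑ k, (y k : ℝ) * (α * ω k).im + lam.im := by
    have h1 : (∑ k, (x k : ℂ) * ω k).im = ∑ k, (x k : ℝ) * (ω k).im := by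
      rw [Complex.im_sum]
      exact Finset.sum_congr rfl fun i _ => by simp [Complex.mul_im]
    have h2 : (α * ∑ k, (y k : ℂ) * ω k).im = ∑ k, (y k : ℝ) * (α * ω k).im := by
      rw [Finset.mul_sum, Complex.im_sum]
      refine Finset.sum_congr rfl fun i _ => ?_
      rw [mul_left_comm]
      simp [Complex.mul_im]
    rw [hβ, Complex.add_im, Complex.sub_im, h1, h2]
  -- evaluation of the coordinates of v
  have hlastim : v (Fin.last (2 * m + 2)) = H * β.im := by
    have hi : ((Fin.last (2 * m + 2)) : ℕ) = 2 * m + 2 := rfl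
    rw [hv]
    simp only [latVec, WithLp.ofLp_toLp, hi]
    split_ifs <;> first | (exfalso; omega) | (rw [hβim]; push_cast; ring)
  have hlastre : v ((Fin.last (2 * m + 1)).castSucc) = H * β.re := by
    have hi : (((Fin.last (2 * m + 1)).castSucc) : ℕ) = 2 * m + 1 := rfl
    rw [hv]
    simp only [latVec, WithLp.ofLp_toLp, hi]
    split_ifs <;> first | (exfalso; omega) | (rw [hβre]; push_cast; ring)
  have h2mval : v ((Fin.last (2 * m)).castSucc.castSucc) = 1 :=
    hval2m _ rfl
  have hcoord : ∀ i : Fin (2 * m + 3), (i : ℕ) < 2 * m → (v i) ^ 2 ≤ A ^ 2 := by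
    intro i hi
    rw [hv]
    simp only [latVec, WithLp.ofLp_toLp]
    split_ifs <;>
      first
        | (rw [← sq_abs]; exact pow_le_pow_left₀ (abs_nonneg _) (hxA _) 2)
        | (rw [← sq_abs]; exact pow_le_pow_left₀ (abs_nonneg _) (hyA _) 2)
        | (exfalso; omega)
  -- norm of v squared
  have hnormsq : ‖v‖ ^ 2 = ∑ j, (v j) ^ 2 := by
    rw [EuclideanSpace.norm_eq, Real.sq_sqrt (Finset.sum_nonneg fun j _ => sq_nonneg _)]
    exact Finset.sum_congr rfl fun j _ => by rw [Real.norm_eq_abs, sq_abs]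
  have hsplit : ∑ j, (v j) ^ 2
      = (∑ j : Fin (2 * m + 2), (v j.castSucc) ^ 2) + (v (Fin.last (2 * m + 2))) ^ 2 :=
    Fin.sum_univ_castSucc _
  have hsplit2 : ∑ j : Fin (2 * m + 2), (v j.castSucc) ^ 2
      = (∑ j : Fin (2 * m + 1), (v j.castSucc.castSucc) ^ 2)
        + (v ((Fin.last (2 * m + 1)).castSucc)) ^ 2 :=
    Fin.sum_univ_castSucc _
  have hsplit3 : ∑ j : Fin (2 * m + 1), (v j.castSucc.castSucc) ^ 2
      = (∑ j : Fin (2 * m), (v j.castSucc.castSucc.castSucc) ^ 2)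
        + (v ((Fin.last (2 * m)).castSucc.castSucc)) ^ 2 :=
    Fin.sum_univ_castSucc _
  have hsum2m : ∑ j : Fin (2 * m), (v j.castSucc.castSucc.castSucc) ^ 2 ≤ 2 * (m : ℝ) * A ^ 2 := by
    calc ∑ j : Fin (2 * m), (v j.castSucc.castSucc.castSucc) ^ 2
        ≤ (Finset.univ : Finset (Fin (2 * m))).card • A ^ 2 :=
          Finset.sum_le_card_nsmul _ _ _ (fun j _ => hcoord _ (by
            simp only [Fin.coe_castSucc]; exact j.isLt))
      _ = 2 * (m : ℝ) * A ^ 2 := by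
          rw [nsmul_eq_mul, Finset.card_univ, Fintype.card_fin]
          push_cast; ring
  have habs2 : (H * β.re) ^ 2 + (H * β.im) ^ 2 = H ^ 2 * (‖β‖) ^ 2 := by
    rw [Complex.sq_norm, Complex.normSq_apply]; ring
  have hub : ‖v‖ ^ 2 ≤ 2 * (m : ℝ) * A ^ 2 + 1 + H ^ 2 * (‖β‖) ^ 2 := by
    rw [hnormsq, hsplit, hsplit2, hsplit3, hlastre, hlastim, h2mval]
    nlinarith [hsum2m, habs2]
  -- lower bound on ‖v‖²
  have hpow : (0:ℝ) < 2 ^ (2 * m) := by positivity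
  have hb1sq : ((2 * (m : ℝ) + 1) * 2 ^ (2 * m)) * A0 ^ 2 ≤ ‖b1‖ ^ 2 := by
    have h0 : (0:ℝ) ≤ (2 * (m : ℝ) + 1) * 2 ^ (2 * m) := by positivity
    calc ((2 * (m : ℝ) + 1) * 2 ^ (2 * m)) * A0 ^ 2
        = (Real.sqrt ((2 * (m : ℝ) + 1) * 2 ^ (2 * m)) * A0) ^ 2 := by
          rw [mul_pow, Real.sq_sqrt h0]
      _ ≤ ‖b1‖ ^ 2 := pow_le_pow_left₀ (by positivity) hb1 2
  have hvsq : (2 * (m : ℝ) + 1) * A0 ^ 2 ≤ ‖v‖ ^ 2 := by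
    have h := hLLL v hvL hvne
    have h2 : (2:ℝ) ^ (2 * m) * ((2 * (m : ℝ) + 1) * A0 ^ 2) ≤ 2 ^ (2 * m) * ‖v‖ ^ 2 := by
      linarith
    exact (mul_le_mul_iff_right₀ hpow).mp h2
  -- lower bound on H |β|
  have hA0_2 : (2:ℝ) ≤ A0 := le_trans hA2 hAup
  have hAsq : A ^ 2 ≤ A0 ^ 2 := pow_le_pow_left₀ hApos.le hAup 2
  have hβbig : 3 / 4 * A0 ^ 2 ≤ H ^ 2 * (‖β‖) ^ 2 := by
    have hm0 : (0:ℝ) ≤ (m : ℝ) := Nat.cast_nonneg m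
    nlinarith [hvsq, hub, mul_le_mul_of_nonneg_left hAsq (by positivity : (0:ℝ) ≤ 2 * (m:ℝ))]
  have hHb : Real.sqrt 3 / 2 * A0 ≤ H * ‖β‖ := by
    have h1 : (Real.sqrt 3 / 2 * A0) ^ 2 ≤ (H * ‖β‖) ^ 2 := by
      rw [mul_pow, div_pow, Real.sq_sqrt (by norm_num : (0:ℝ) ≤ 3), mul_pow]
      linarith
    have h2 : (0:ℝ) ≤ H * ‖β‖ := by positivity
    have h3 := Real.sqrt_le_sqrt h1
    rwa [Real.sqrt_sq (by positivity), Real.sqrt_sq h2] at h3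
  -- combine with the smallness of β
  have hnk : (0:ℝ) < (n : ℝ) - (k : ℝ) - 1 := by
    have : ((k:ℝ) + 2) ≤ (n : ℝ) := by exact_mod_cast hk
    linarith
  have hAe : Real.sqrt 3 * A0 / (2 * H * c9) ≤ A ^ ((k : ℝ) + 1 - (n : ℝ)) := by
    rw [div_le_iff₀ (by positivity)]
    have h3 := mul_le_mul_of_nonneg_left hβsmall hH.le
    linarith
  have hApowpos : (0:ℝ) < A ^ ((k : ℝ) + 1 - (n : ℝ)) := Real.rpow_pos_of_pos hApos _
  have hsqrt3 : (0:ℝ) < Real.sqrt 3 := Real.sqrt_pos.mpr (by norm_num)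
  have hApow : A ^ ((n : ℝ) - (k : ℝ) - 1) ≤ 2 * c9 * H / (Real.sqrt 3 * A0) := by
    rw [show ((n : ℝ) - (k : ℝ) - 1) = -((k : ℝ) + 1 - (n : ℝ)) by ring,
      Real.rpow_neg hApos.le]
    have hpos : (0:ℝ) < Real.sqrt 3 * A0 / (2 * H * c9) := by positivity
    calc (A ^ ((k : ℝ) + 1 - (n : ℝ)))⁻¹
        ≤ (Real.sqrt 3 * A0 / (2 * H * c9))⁻¹ := inv_anti₀ hpos hAe
      _ = 2 * c9 * H / (Real.sqrt 3 * A0) := by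
          rw [inv_div]
          ring
  have hid : (A ^ ((n : ℝ) - (k : ℝ) - 1)) ^ ((1 : ℝ) / ((n : ℝ) - (k : ℝ) - 1)) = A := by
    rw [← Real.rpow_mul hApos.le, mul_one_div, div_self hnk.ne', Real.rpow_one]
  calc A = (A ^ ((n : ℝ) - (k : ℝ) - 1)) ^ ((1 : ℝ) / ((n : ℝ) - (k : ℝ) - 1)) := hid.symm
    _ ≤ (2 * c9 * H / (Real.sqrt 3 * A0)) ^ ((1 : ℝ) / ((n : ℝ) - (k : ℝ) - 1)) :=
        Real.rpow_le_rpow (Real.rpow_nonneg hApos.le _) hApow (by positivity)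
end
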